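/- Let A be an almost commutative local ring with maximal ideal m and residue field k. Let f ∈ A[x] be monic with f̄ = f₁f₂ for relatively prime monic polynomials f₁, f₂ ∈ k[x], and let r ≥ 1. Suppose F₁, F₂ ∈ A[x] are monic with F̄₁ = f₁, F̄₂ = f₂, and f − F₁F₂ ∈ mʳ[x]. Then there exist G₁, G₂ ∈ mʳ[x] with deg(G₁) < deg(f₁) and deg(G₂) < deg(f₂) such that f − (F₁ + G₁)(F₂ + G₂) ∈ m^{r+1}[x]. -/

import Mathlib

open Polynomial

/-- The `n`-th power of a two-sided ideal, given as a set `m` in a (possibly non-commutative)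
ring `A`, realized as an additive subgroup: `m ^ 0 = A` and `m ^ (n+1)` is the additive group
generated by products `a * b` with `a ∈ m`, `b ∈ m ^ n`. -/
def idealPow {A : Type*} [Ring A] (m : Set A) : ℕ → AddSubgroup A
  | 0 => ⊤
  | n + 1 => AddSubgroup.closure {x | ∃ a ∈ m, ∃ b ∈ idealPow m n, x = a * b}

namespace HenselAux

variable {A : Type*} [Ring A] {K : Type*} [Field K] {π : A →+* K}
variable {m : Set A} (hm : ∀ a : A, a ∈ m ↔ π a = 0)

include hm

lemma m_mul_left {a : A} (ha : a ∈ m) (c : A) : c * a ∈ m := by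
  rw [hm] at ha ⊢; rw [map_mul, ha, mul_zero]

omit hm in
lemma mem_one {a : A} (ha : a ∈ m) : a ∈ idealPow m 1 :=
  AddSubgroup.subset_closure ⟨a, ha, 1, AddSubgroup.mem_top _, (mul_one a).symm⟩

omit hm in
lemma pow_mul_right : ∀ n : ℕ, ∀ x ∈ idealPow m n, ∀ c : A, x * c ∈ idealPow m n := by
  intro n
  induction n with
  | zero => intro x _ c; exact AddSubgroup.mem_top _
  | succ n ih =>
    intro x hx c
    refine AddSubgroup.closure_induction ?_ ?_ ?_ ?_ hx
    · rintro y ⟨a, ha, b, hb, rfl⟩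
      rw [mul_assoc]
      exact AddSubgroup.subset_closure ⟨a, ha, b * c, ih b hb c, rfl⟩
    · rw [zero_mul]; exact (idealPow m (n+1)).zero_mem
    · intro y z _ _ hy hz; rw [add_mul]; exact (idealPow m (n+1)).add_mem hy hz
    · intro y _ hy; rw [neg_mul]; exact (idealPow m (n+1)).neg_mem hy

lemma pow_mul_left : ∀ n : ℕ, ∀ x ∈ idealPow m n, ∀ c : A, c * x ∈ idealPow m n := by
  intro n
  cases n with
  | zero => intro x _ c; exact AddSubgroup.mem_top _
  | succ n =>
    intro x hx c
    refine AddSubgroup.closure_induction ?_ ?_ ?_ ?_ hx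
    · rintro y ⟨a, ha, b, hb, rfl⟩
      rw [← mul_assoc]
      exact AddSubgroup.subset_closure ⟨c * a, m_mul_left hm ha c, b, hb, rfl⟩
    · rw [mul_zero]; exact (idealPow m (n+1)).zero_mem
    · intro y z _ _ hy hz; rw [mul_add]; exact (idealPow m (n+1)).add_mem hy hz
    · intro y _ hy; rw [mul_neg]; exact (idealPow m (n+1)).neg_mem hy

lemma pow_mul_pow : ∀ i j : ℕ, ∀ x ∈ idealPow m i, ∀ y ∈ idealPow m j,
    x * y ∈ idealPow m (i + j) := by
  intro i
  induction i with
  | zero => intro j x _ y hy; simpa using pow_mul_left hm j y hy x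
  | succ i ih =>
    intro j x hx y hy
    have hrw : i + 1 + j = (i + j) + 1 := by omega
    rw [hrw]
    refine AddSubgroup.closure_induction ?_ ?_ ?_ ?_ hx
    · rintro z ⟨a, ha, b, hb, rfl⟩
      rw [mul_assoc]
      exact AddSubgroup.subset_closure ⟨a, ha, b * y, ih j b hb y hy, rfl⟩
    · rw [zero_mul]; exact AddSubgroup.zero_mem _
    · intro z w _ _ hz hw; rw [add_mul]; exact AddSubgroup.add_mem _ hz hw
    · intro z _ hz; rw [neg_mul]; exact AddSubgroup.neg_mem _ hz

lemma pow_antitone_succ (n : ℕ) : idealPow m (n + 1) ≤ idealPow m n := by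
  rw [show idealPow m (n+1) = AddSubgroup.closure _ from rfl, AddSubgroup.closure_le]
  rintro x ⟨a, ha, b, hb, rfl⟩
  exact pow_mul_left hm n b hb a

lemma pow_antitone : ∀ {i j : ℕ}, i ≤ j → idealPow m j ≤ idealPow m i := by
  intro i j hij
  induction j with
  | zero => simpa [Nat.le_zero.mp hij] using le_refl _
  | succ j ih =>
    rcases Nat.lt_or_ge i (j+1) with h | h
    · exact le_trans (pow_antitone_succ hm j) (ih (by omega))
    · have : i = j + 1 := le_antisymm hij h
      subst this; exact le_refl _

omit hm in
lemma exists_partial {K : Type*} [Field K] {f₁ f₂ : K[X]} (hf₁ : f₁.Monic) (hf₂ : f₂.Monic)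
    (hcop : IsCoprime f₁ f₂) (k : ℕ) :
    ∃ a1 a2 : K[X], a1 * f₂ + a2 * f₁ = X ^ k ∧ a1.degree < f₁.degree ∧
      ((k : WithBot ℕ) < f₁.degree + f₂.degree → a2.degree < f₂.degree) := by
  obtain ⟨u, v, huv⟩ := hcop
  refine ⟨(X ^ k * v) %ₘ f₁, X ^ k * u + (X ^ k * v /ₘ f₁) * f₂, ?_, ?_, ?_⟩
  · have h := modByMonic_add_div (X ^ k * v) f₁
    linear_combination f₂ * h + X ^ k * huv
  · exact degree_modByMonic_lt _ hf₁
  · intro hk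
    set a1 := (X ^ k * v) %ₘ f₁ with ha1
    set a2 := X ^ k * u + (X ^ k * v /ₘ f₁) * f₂ with ha2
    have key : a1 * f₂ + a2 * f₁ = X ^ k := by
      have h := modByMonic_add_div (X ^ k * v) f₁
      linear_combination f₂ * h + X ^ k * huv
    have h2 : a2 * f₁ = X ^ k - a1 * f₂ := by linear_combination key
    have hle : (a2 * f₁).degree < f₁.degree + f₂.degree := by
      rw [h2]
      refine lt_of_le_of_lt (degree_sub_le _ _) (max_lt ?_ ?_)
      · simpa using hk
      · rw [degree_mul]
        have hbot : f₂.degree ≠ ⊥ := by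
          simp [degree_eq_bot, hf₂.ne_zero]
        exact WithBot.add_lt_add_right hbot (degree_modByMonic_lt _ hf₁)
    rw [degree_mul, add_comm f₁.degree f₂.degree] at hle
    have hbot : f₁.degree ≠ ⊥ := by simp [degree_eq_bot, hf₁.ne_zero]
    exact (WithBot.add_lt_add_iff_right hbot).mp hle

omit hm in
lemma degree_C_mul_le {A : Type*} [Ring A] (a : A) (p : A[X]) :
    (C a * p).degree ≤ p.degree :=
  le_trans (degree_mul_le _ _) (by simpa using add_le_add_left (degree_C_le (a := a)) p.degree)

end HenselAux

/-- Let `A` be a (possibly non-commutative) almost commutative local ring: the non-invertible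
elements form a two-sided ideal `m`, encoded by a surjective ring homomorphism `π : A → K` onto
the residue field `K` with kernel the non-units, and the associated graded ring
`gr(A) = ⊕ mⁱ/mⁱ⁺¹` is commutative (`a * b - b * a ∈ m^(i+j+1)` for `a ∈ mⁱ`, `b ∈ mʲ`).
Let `f ∈ A[x]` be monic with `f̄ = f₁ * f₂` for relatively prime monic polynomials
`f₁, f₂ ∈ K[x]`, and let `r ≥ 1`.  Suppose `F₁, F₂ ∈ A[x]` are monic with `F̄₁ = f₁`,
`F̄₂ = f₂`, and `f − F₁F₂ ∈ mʳ[x]` (all coefficients lie in `mʳ`).  Then there exist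
`G₁, G₂ ∈ mʳ[x]` with `deg G₁ < deg f₁` and `deg G₂ < deg f₂` such that
`f − (F₁ + G₁)(F₂ + G₂) ∈ m^(r+1)[x]`. -/
theorem henselian_inductive_step
    {A : Type*} [Ring A] {K : Type*} [Field K]
    (π : A →+* K) (hπsurj : Function.Surjective π)
    (hπker : ∀ a : A, π a = 0 ↔ ¬ IsUnit a)
    -- almost commutative
    (hac : ∀ i j : ℕ, ∀ a ∈ idealPow {a : A | ¬ IsUnit a} i,
      ∀ b ∈ idealPow {a : A | ¬ IsUnit a} j,
        a * b - b * a ∈ idealPow {a : A | ¬ IsUnit a} (i + j + 1))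
    (f : A[X]) (hf : f.Monic) (f₁ f₂ : K[X])
    (hf₁ : f₁.Monic) (hf₂ : f₂.Monic) (hcop : IsCoprime f₁ f₂)
    (hred : f.map π = f₁ * f₂)
    (r : ℕ) (hr : 1 ≤ r)
    (F₁ F₂ : A[X]) (hF₁ : F₁.Monic) (hF₂ : F₂.Monic)
    (hF₁red : F₁.map π = f₁) (hF₂red : F₂.map π = f₂)
    (happrox : ∀ n : ℕ, (f - F₁ * F₂).coeff n ∈ idealPow {a : A | ¬ IsUnit a} r) :
    ∃ G₁ G₂ : A[X],
      (∀ n : ℕ, G₁.coeff n ∈ idealPow {a : A | ¬ IsUnit a} r) ∧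
      (∀ n : ℕ, G₂.coeff n ∈ idealPow {a : A | ¬ IsUnit a} r) ∧
      G₁.degree < f₁.degree ∧ G₂.degree < f₂.degree ∧
      ∀ n : ℕ, (f - (F₁ + G₁) * (F₂ + G₂)).coeff n ∈
        idealPow {a : A | ¬ IsUnit a} (r + 1) := by
  classical
  set mS : Set A := {a : A | ¬ IsUnit a} with hmS
  have hm : ∀ a : A, a ∈ mS ↔ π a = 0 := fun a => (hπker a).symm
  haveI : Nontrivial A :=
    ⟨⟨0, 1, fun h => one_ne_zero (by rw [← map_one π, ← h, map_zero])⟩⟩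
  -- degree bookkeeping
  have hdegf : f.degree = f₁.degree + f₂.degree := by
    rw [← hf.degree_map π, hred, degree_mul]
  have hdegF₁F₂ : (F₁ * F₂).degree = f.degree := by
    rw [← (hF₁.mul hF₂).degree_map π, Polynomial.map_mul, hF₁red, hF₂red, ← hred,
      hf.degree_map π]
  -- the error term
  set Δ : A[X] := f - F₁ * F₂ with hΔdef
  have hΔdeg : Δ.degree < f.degree := by
    refine degree_sub_lt hdegF₁F₂.symm hf.ne_zero ?_
    rw [hf.leadingCoeff, (hF₁.mul hF₂).leadingCoeff]
  -- partial fraction data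
  choose a1 a2 hkey ha1deg ha2deg using
    fun k : ℕ => HenselAux.exists_partial hf₁ hf₂ hcop k
  -- lifts
  have hlift : ∀ p : K[X], ∃ P : A[X], P.map π = p ∧ P.degree = p.degree := fun p =>
    Polynomial.mem_lifts_and_degree_eq ((lifts_iff_coeff_lifts p).2 fun n => hπsurj _)
  choose A1 hA1 hA1deg using fun k : ℕ => hlift (a1 k)
  choose A2 hA2 hA2deg using fun k : ℕ => hlift (a2 k)
  set S : Finset ℕ := Δ.support with hSdef
  have hkS : ∀ k ∈ S, (k : WithBot ℕ) < f₁.degree + f₂.degree := by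
    intro k hk
    have h1 : (k : WithBot ℕ) ≤ Δ.degree := le_degree_of_ne_zero (mem_support_iff.mp hk)
    exact lt_of_le_of_lt h1 (hdegf ▸ hΔdeg)
  set G₁ : A[X] := ∑ k ∈ S, C (Δ.coeff k) * A1 k with hG₁def
  set G₂ : A[X] := ∑ k ∈ S, C (Δ.coeff k) * A2 k with hG₂def
  have hΔmem : ∀ k : ℕ, Δ.coeff k ∈ idealPow mS r := happrox
  -- coefficient memberships of G₁, G₂
  have hG₁mem : ∀ n : ℕ, G₁.coeff n ∈ idealPow mS r := by
    intro n
    rw [hG₁def, finset_sum_coeff]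
    refine AddSubgroup.sum_mem _ fun k _ => ?_
    rw [coeff_C_mul]
    exact HenselAux.pow_mul_right r _ (hΔmem k) _
  have hG₂mem : ∀ n : ℕ, G₂.coeff n ∈ idealPow mS r := by
    intro n
    rw [hG₂def, finset_sum_coeff]
    refine AddSubgroup.sum_mem _ fun k _ => ?_
    rw [coeff_C_mul]
    exact HenselAux.pow_mul_right r _ (hΔmem k) _
  -- degrees of G₁, G₂
  have hf₁bot : (⊥ : WithBot ℕ) < f₁.degree :=
    bot_lt_iff_ne_bot.mpr (by simp [degree_eq_bot, hf₁.ne_zero])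
  have hf₂bot : (⊥ : WithBot ℕ) < f₂.degree :=
    bot_lt_iff_ne_bot.mpr (by simp [degree_eq_bot, hf₂.ne_zero])
  have hG₁deg : G₁.degree < f₁.degree := by
    rw [hG₁def]
    refine lt_of_le_of_lt (degree_sum_le _ _) ((Finset.sup_lt_iff hf₁bot).2 ?_)
    intro k _
    refine lt_of_le_of_lt (HenselAux.degree_C_mul_le _ _) ?_
    rw [hA1deg k]
    exact ha1deg k
  have hG₂deg : G₂.degree < f₂.degree := by
    rw [hG₂def]
    refine lt_of_le_of_lt (degree_sum_le _ _) ((Finset.sup_lt_iff hf₂bot).2 ?_)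
    intro k hk
    refine lt_of_le_of_lt (HenselAux.degree_C_mul_le _ _) ?_
    rw [hA2deg k]
    exact ha2deg k (hkS k hk)
  -- the main estimate
  have hT : ∀ k ∈ S, ∀ j : ℕ,
      (C (Δ.coeff k) * X ^ k - F₁ * (C (Δ.coeff k) * A2 k)
        - C (Δ.coeff k) * A1 k * F₂).coeff j ∈ idealPow mS (r + 1) := by
    intro k _ j
    have hsplit : C (Δ.coeff k) * X ^ k - F₁ * (C (Δ.coeff k) * A2 k)
        - C (Δ.coeff k) * A1 k * F₂
        = C (Δ.coeff k) * (X ^ k - F₁ * A2 k - A1 k * F₂)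
          + (C (Δ.coeff k) * F₁ - F₁ * C (Δ.coeff k)) * A2 k := by
      noncomm_ring
    rw [hsplit, coeff_add]
    refine AddSubgroup.add_mem _ ?_ ?_
    · rw [coeff_C_mul]
      refine HenselAux.pow_mul_pow hm r 1 _ (hΔmem k) _ (HenselAux.mem_one ?_)
      rw [hm]
      have hmap : (X ^ k - F₁ * A2 k - A1 k * F₂ : A[X]).map π = 0 := by
        rw [Polynomial.map_sub, Polynomial.map_sub, Polynomial.map_mul, Polynomial.map_mul,
          Polynomial.map_pow, map_X, hF₁red, hF₂red, hA1, hA2]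
        linear_combination -(hkey k)
      calc π ((X ^ k - F₁ * A2 k - A1 k * F₂).coeff j)
          = ((X ^ k - F₁ * A2 k - A1 k * F₂).map π).coeff j := (coeff_map _ _).symm
        _ = 0 := by rw [hmap]; simp
    · rw [coeff_mul]
      refine AddSubgroup.sum_mem _ ?_
      rintro ⟨i, j'⟩ _
      refine HenselAux.pow_mul_right (r + 1) _ ?_ _
      rw [coeff_sub, coeff_C_mul, coeff_mul_C]
      have h := hac r 0 (Δ.coeff k) (hΔmem k) (F₁.coeff i) (AddSubgroup.mem_top _)
      simpa using h
  have hΔrepr : Δ = ∑ k ∈ S, C (Δ.coeff k) * X ^ k := by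
    simp_rw [C_mul_X_pow_eq_monomial]
    exact Δ.as_sum_support
  have hmain : ∀ n : ℕ,
      (Δ - (F₁ * G₂ + G₁ * F₂)).coeff n ∈ idealPow mS (r + 1) := by
    have hGident : Δ - (F₁ * G₂ + G₁ * F₂)
        = ∑ k ∈ S, (C (Δ.coeff k) * X ^ k - F₁ * (C (Δ.coeff k) * A2 k)
            - C (Δ.coeff k) * A1 k * F₂) := by
      nth_rewrite 1 [hΔrepr]
      rw [hG₁def, hG₂def, Finset.mul_sum, Finset.sum_mul, ← Finset.sum_add_distrib,
        ← Finset.sum_sub_distrib]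
      refine Finset.sum_congr rfl fun k _ => ?_
      noncomm_ring
    intro n
    rw [hGident, finset_sum_coeff]
    exact AddSubgroup.sum_mem _ fun k hk => hT k hk n
  have hGGmem : ∀ n : ℕ, (G₁ * G₂).coeff n ∈ idealPow mS (r + 1) := by
    intro n
    rw [coeff_mul]
    refine AddSubgroup.sum_mem _ ?_
    rintro ⟨i, j⟩ _
    exact HenselAux.pow_antitone hm (by omega : r + 1 ≤ r + r)
      (HenselAux.pow_mul_pow hm r r _ (hG₁mem i) _ (hG₂mem j))
  refine ⟨G₁, G₂, hG₁mem, hG₂mem, hG₁deg, hG₂deg, ?_⟩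
  intro n
  have hfin : f - (F₁ + G₁) * (F₂ + G₂)
      = (Δ - (F₁ * G₂ + G₁ * F₂)) - G₁ * G₂ := by
    rw [hΔdef]; noncomm_ring
  rw [hfin, coeff_sub]
  exact AddSubgroup.sub_mem _ (hmain n) (hGGmem n)
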